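/- Let n be a natural number, V a ℂ-linear subspace of ℂⁿ, and k a subfield of ℂ. Then V is the set of common solutions of a family of homogeneous linear equations with coefficients in k (i.e., V is the intersection of kernels of functionals x ↦ c₁x₁ + ⋯ + cₙxₙ with all cᵢ ∈ k) if and only if V is spanned over ℂ by vectors all of whose coordinates (in the standard basis) lie in k. -/

import Mathlib

set_option synthInstance.maxHeartbeats 1000000
set_option maxHeartbeats 1000000

open Module Submodule

noncomputable section AuxDefs

variable {F : Type*} [Field F]

/-- Solution space of the homogeneous equations with coefficient vectors in `C`. -/
def solSpace (F : Type*) [Field F] (n : ℕ) (C : Set (Fin n → F)) :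
    Submodule F (Fin n → F) where
  carrier := {x | ∀ c ∈ C, ∑ j, c j * x j = 0}
  add_mem' := by
    intro a b ha hb c hc
    simp only [Set.mem_setOf_eq] at *
    simp [mul_add, Finset.sum_add_distrib, ha c hc, hb c hc]
  zero_mem' := by intro c hc; simp
  smul_mem' := by
    intro t x hx c hc
    simp only [Set.mem_setOf_eq] at *
    simp [smul_eq_mul, mul_left_comm, ← Finset.mul_sum, hx c hc]

lemma mem_solSpace {n : ℕ} {C : Set (Fin n → F)} {x : Fin n → F} :
    x ∈ solSpace F n C ↔ ∀ c ∈ C, ∑ j, c j * x j = 0 := Iff.rfl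

def pairing (F : Type*) [Field F] (n : ℕ) :
    (Fin n → F) →ₗ[F] (Fin n → F) →ₗ[F] F :=
  LinearMap.mk₂ F (fun c x => ∑ j, c j * x j)
    (fun c c' x => by simp [add_mul, Finset.sum_add_distrib])
    (fun t c x => by simp [Finset.mul_sum, mul_assoc])
    (fun c x x' => by simp [mul_add, Finset.sum_add_distrib])
    (fun t c x => by simp [Finset.mul_sum, mul_left_comm])

lemma pairing_injective {n : ℕ} : Function.Injective (pairing F n) := by
  intro c c' h
  funext j
  have := congrArg (fun f => f (Pi.single j (1 : F))) h
  simpa [pairing, Pi.single_apply, mul_ite, Finset.sum_ite_eq'] using this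

def pairingEquiv (F : Type*) [Field F] (n : ℕ) :
    (Fin n → F) ≃ₗ[F] Dual F (Fin n → F) :=
  LinearMap.linearEquivOfInjective (pairing F n) pairing_injective
    (Subspace.dual_finrank_eq).symm

lemma pairingEquiv_apply {n : ℕ} (c x : Fin n → F) :
    pairingEquiv F n c x = ∑ j, c j * x j := by
  simp [pairingEquiv, LinearMap.linearEquivOfInjective, pairing]

lemma solSpace_eq_dualCoannihilator (n : ℕ) (C : Set (Fin n → F)) :
    solSpace F n C
      = ((span F C).map (pairingEquiv F n).toLinearMap).dualCoannihilator := by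
  ext x
  rw [mem_solSpace, Submodule.mem_dualCoannihilator]
  constructor
  · intro hx φ hφ
    rw [Submodule.mem_map] at hφ
    obtain ⟨c, hc, rfl⟩ := hφ
    have hker : span F C ≤ LinearMap.ker ((pairing F n).flip x) := by
      rw [Submodule.span_le]
      intro c' hc'
      simpa [LinearMap.mem_ker, pairing] using hx c' hc'
    have := hker hc
    simpa [LinearMap.mem_ker, pairingEquiv_apply, pairing] using this
  · intro h c hc
    have := h _ (Submodule.mem_map_of_mem (Submodule.subset_span hc))
    simpa [pairingEquiv_apply] using this

lemma solSpace_finrank (n : ℕ) (C : Set (Fin n → F)) :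
    finrank F (solSpace F n C) + finrank F (span F C) = n := by
  have h := Subspace.finrank_add_finrank_dualCoannihilator_eq
    ((span F C).map (pairingEquiv F n).toLinearMap)
  rw [LinearEquiv.finrank_map_eq, Module.finrank_pi, Fintype.card_fin] at h
  rw [solSpace_eq_dualCoannihilator]
  omega

end AuxDefs

section Subfield

variable (k : Subfield ℂ) (n : ℕ)

def incl : (Fin n → k) →ₗ[k] (Fin n → ℂ) where
  toFun v := fun j => (v j : ℂ)
  map_add' a b := by funext j; simp
  map_smul' c v := rfl

@[simp] lemma incl_apply (v : Fin n → k) (j : Fin n) : incl k n v j = (v j : ℂ) := rfl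

variable {k n}

lemma li_incl {m : ℕ} {b : Fin m → (Fin n → k)}
    (hb : LinearIndependent k b) :
    LinearIndependent ℂ (fun i => incl k n (b i)) := by
  rw [Fintype.linearIndependent_iff] at hb ⊢
  intro g hg
  set β := Basis.ofVectorSpace k ℂ with hβ
  have h1 : ∀ j, ∑ i, g i * (b i j : ℂ) = 0 := by
    intro j
    have := congrFun hg j
    simpa [Finset.sum_apply] using this
  have h2 : ∀ t j, ∑ i, (β.repr (g i) t) * b i j = 0 := by
    intro t j
    have hs : ∑ i, (b i j : k) • g i = 0 := by
      calc ∑ i, (b i j : k) • g i = ∑ i, g i * (b i j : ℂ) := by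
            refine Finset.sum_congr rfl fun i _ => ?_
            show (b i j : ℂ) * g i = g i * (b i j : ℂ)
            ring
        _ = 0 := h1 j
    have := congrArg (fun z => β.repr z t) hs
    simpa [map_sum, Finsupp.smul_apply, smul_eq_mul, mul_comm] using this
  intro i
  have h4 : ∀ t, β.repr (g i) t = 0 := by
    intro t
    refine hb (fun i => β.repr (g i) t) ?_ i
    funext j
    simpa [Finset.sum_apply, smul_eq_mul] using h2 t j
  have : β.repr (g i) = 0 := Finsupp.ext h4
  simpa using β.repr.map_eq_zero_iff.mp this

lemma incl_span_mem (s : Set (Fin n → k)) {x : Fin n → k} (hx : x ∈ span k s) :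
    incl k n x ∈ span ℂ (incl k n '' s) := by
  have h1 : incl k n x ∈ (span k s).map (incl k n) := Submodule.mem_map_of_mem hx
  rw [Submodule.map_span] at h1
  exact Submodule.span_le_restrictScalars k ℂ _ h1

lemma finrank_span_incl_image (T : Set (Fin n → k)) :
    finrank ℂ (span ℂ (incl k n '' T)) = finrank k (span k T) := by
  set W := span k T with hW
  let b := Module.finBasis k W
  have hli0 : LinearIndependent k (fun i => ((b i : Fin n → k))) :=
    b.linearIndependent.map' W.subtype (Submodule.ker_subtype W)
  have hli : LinearIndependent ℂ (fun i => incl k n (b i)) := li_incl hli0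
  have hWb : span k (Set.range fun i => ((b i : Fin n → k))) = W := by
    calc span k (Set.range fun i => ((b i : Fin n → k)))
        = span k (W.subtype '' Set.range b) := by rw [← Set.range_comp]; rfl
      _ = (span k (Set.range b)).map W.subtype := (Submodule.map_span _ _).symm
      _ = (⊤ : Submodule k W).map W.subtype := by rw [b.span_eq]
      _ = W := by simp
  have hsp : span ℂ (Set.range fun i => incl k n (b i)) = span ℂ (incl k n '' T) := by
    apply le_antisymm
    · rw [Submodule.span_le]
      rintro _ ⟨i, rfl⟩
      exact incl_span_mem T (hW ▸ (b i).2)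
    · rw [Submodule.span_le]
      rintro _ ⟨t, ht, rfl⟩
      have htW : t ∈ span k (Set.range fun i => ((b i : Fin n → k))) := by
        rw [hWb]; exact Submodule.subset_span ht
      have h := incl_span_mem _ htW
      have himg : incl k n '' (Set.range fun i => ((b i : Fin n → k)))
          = Set.range fun i => incl k n (b i) := by
        rw [← Set.range_comp]; rfl
      rwa [himg] at h
  rw [← hsp, finrank_span_eq_card hli, Fintype.card_fin]

end Subfield

/-- A ℂ-linear subspace `V` of `ℂⁿ` is cut out by a family of homogeneous
linear equations with coefficients in a subfield `k` of `ℂ` if and only if `V` is spanned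
over `ℂ` by vectors all of whose coordinates lie in `k`. -/
theorem subspace_defined_by_equations_iff_spanned_over
    (n : ℕ) (V : Submodule ℂ (Fin n → ℂ)) (k : Subfield ℂ) :
    (∃ C : Set (Fin n → ℂ), (∀ c ∈ C, ∀ j, c j ∈ k) ∧
      (V : Set (Fin n → ℂ)) = {x | ∀ c ∈ C, ∑ j, c j * x j = 0}) ↔
    (∃ S : Set (Fin n → ℂ), (∀ v ∈ S, ∀ j, v j ∈ k) ∧ Submodule.span ℂ S = V) := by
  constructor
  · rintro ⟨C, hCk, hCV⟩
    set C' : Set (Fin n → k) := {c | incl k n c ∈ C} with hC'def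
    have hC : C = incl k n '' C' := by
      ext c
      constructor
      · intro hc
        refine ⟨fun j => ⟨c j, hCk c hc j⟩, ?_, rfl⟩
        show incl k n _ ∈ C
        convert hc using 1
        rfl
      · rintro ⟨c', hc', rfl⟩; exact hc'
    have hVsol : V = solSpace ℂ n C := SetLike.coe_injective hCV
    set S : Set (Fin n → ℂ) := incl k n '' ((solSpace k n C' : Submodule k (Fin n → k)) : Set (Fin n → k)) with hSdef
    refine ⟨S, ?_, ?_⟩
    · rintro v ⟨w, hw, rfl⟩ j; exact (w j).2
    have hSV : span ℂ S ≤ V := by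
      rw [hVsol, Submodule.span_le]
      rintro _ ⟨w, hw, rfl⟩
      intro c hc
      rw [hC] at hc
      obtain ⟨c', hc', rfl⟩ := hc
      have hw' : ∀ u ∈ C', ∑ j, u j * w j = 0 := hw
      have := hw' c' hc'
      have hcast : ((∑ j, c' j * w j : k) : ℂ) = ∑ j, (c' j : ℂ) * (w j : ℂ) := by
        push_cast; rfl
      calc ∑ j, incl k n c' j * incl k n w j = ((∑ j, c' j * w j : k) : ℂ) := hcast.symm
        _ = 0 := by rw [this]; simp
    have d1 := solSpace_finrank (F := ℂ) n C
    have d2 := solSpace_finrank (F := k) n C'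
    have e1 : finrank ℂ (span ℂ C) = finrank k (span k C') := by
      rw [hC]; exact finrank_span_incl_image C'
    have e2 : finrank ℂ (span ℂ S) = finrank k (solSpace k n C') := by
      have h := finrank_span_incl_image (k := k) ((solSpace k n C' : Submodule k (Fin n → k)) : Set (Fin n → k))
      rwa [Submodule.span_eq] at h
    have hfr : finrank ℂ (span ℂ S) = finrank ℂ V := by
      rw [hVsol]; omega
    exact Submodule.eq_of_le_of_finrank_eq hSV hfr
  · rintro ⟨S, hSk, hSV⟩
    set S' : Set (Fin n → k) := {v | incl k n v ∈ S} with hS'def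
    have hS : S = incl k n '' S' := by
      ext v
      constructor
      · intro hv
        refine ⟨fun j => ⟨v j, hSk v hv j⟩, ?_, rfl⟩
        show incl k n _ ∈ S
        convert hv using 1
        rfl
      · rintro ⟨v', hv', rfl⟩; exact hv'
    set C : Set (Fin n → ℂ) := incl k n '' ((solSpace k n S' : Submodule k (Fin n → k)) : Set (Fin n → k)) with hCdef
    refine ⟨C, ?_, ?_⟩
    · rintro c ⟨w, hw, rfl⟩ j; exact (w j).2
    suffices h : V = solSpace ℂ n C by rw [h]; rfl
    have hle : V ≤ solSpace ℂ n C := by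
      rw [← hSV, Submodule.span_le]
      intro v hv c hc
      obtain ⟨c', hc', rfl⟩ := hc
      rw [hS] at hv
      obtain ⟨w, hw, rfl⟩ := hv
      have hc'' : ∀ u ∈ S', ∑ j, u j * c' j = 0 := hc'
      have := hc'' w hw
      have hcast : ((∑ j, w j * c' j : k) : ℂ) = ∑ j, (c' j : ℂ) * (w j : ℂ) := by
        push_cast [mul_comm]; rfl
      calc ∑ j, incl k n c' j * incl k n w j = ((∑ j, w j * c' j : k) : ℂ) := hcast.symm
        _ = 0 := by rw [this]; simp
    have d1 := solSpace_finrank (F := ℂ) n C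
    have d2 := solSpace_finrank (F := k) n S'
    have e1 : finrank ℂ (span ℂ C) = finrank k (solSpace k n S') := by
      have h := finrank_span_incl_image (k := k) ((solSpace k n S' : Submodule k (Fin n → k)) : Set (Fin n → k))
      rw [hCdef]; rwa [Submodule.span_eq] at h
    have e2 : finrank ℂ V = finrank k (span k S') := by
      rw [← hSV, hS]; exact finrank_span_incl_image S'
    exact (Submodule.eq_of_le_of_finrank_eq hle (by omega)).symm ▸ rfl
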